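/- Let λ > 0 and let P = (a,b) ∈ Ω_λ with λ|b| < 1. The λ-Funk distance from P to the horizontal line s: x₂ = c (with λ|c| < 1) is d_F(P,s) = (1/λ)ln[(λ²bc - 1 - λ|c - b|)/(λ²c² - 1)], realized at the point Q* = (a/r, c) ∈ s where r = (λ²bc - 1 - λ|c-b|)/(λ²c² - 1); i.e., d_F(P,Q*) = (1/λ)ln r and d_F(P,Q') ≥ (1/λ)ln r for all Q' ∈ s ∩ Ω_λ. -/

import Mathlib

open RealInnerProductSpace Classical

noncomputable def pt (a b : ℝ) : EuclideanSpace ℝ (Fin 2) :=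
  (WithLp.equiv 2 (Fin 2 → ℝ)).symm ![a, b]

/-- The λ-Funk metric. -/
noncomputable def Funk (lam : ℝ) (x y : EuclideanSpace ℝ (Fin 2)) : ℝ :=
  (Real.sqrt (lam ^ 2 * ⟪x, y⟫ ^ 2 + ‖y‖ ^ 2 * (1 - lam ^ 2 * ‖x‖ ^ 2)) + lam * ⟪x, y⟫) /
    (1 - lam ^ 2 * ‖x‖ ^ 2)

/-- The λ-Funk distance. -/
noncomputable def dF (lam : ℝ) (P Q : EuclideanSpace ℝ (Fin 2)) : ℝ :=
  if P = Q then 0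
  else (1 / lam) * Real.log
    ((Real.sqrt (lam ^ 2 * ⟪P, Q - P⟫ ^ 2 + (1 - lam ^ 2 * ‖P‖ ^ 2) * ‖Q - P‖ ^ 2)
        - lam * ⟪P, Q - P⟫) /
     (Real.sqrt (lam ^ 2 * ⟪P, Q - P⟫ ^ 2 + (1 - lam ^ 2 * ‖P‖ ^ 2) * ‖Q - P‖ ^ 2)
        - lam * ⟪Q, Q - P⟫))

lemma pt_sub (x y u v : ℝ) : pt x y - pt u v = pt (x-u) (y-v) := by
  ext i; fin_cases i <;> simp [pt]

lemma pt_inner (x y u v : ℝ) : ⟪pt x y, pt u v⟫ = x*u + y*v := by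
  simp [pt, PiLp.inner_apply, Fin.sum_univ_two, RCLike.inner_apply, conj_trivial]
  ring

lemma pt_norm_sq (x y : ℝ) : ‖pt x y‖^2 = x^2 + y^2 := by
  simp [pt, EuclideanSpace.norm_eq, Fin.sum_univ_two]
  rw [Real.sq_sqrt (by positivity)]

lemma pt_inj {x y u v : ℝ} (h : pt x y = pt u v) : x = u ∧ y = v := by
  have h0 := congrArg (fun p => p 0) h
  have h1 := congrArg (fun p => p 1) h
  simp [pt] at h0 h1
  exact ⟨h0, h1⟩

lemma norm_lt_conv {lam x y : ℝ} (hlam : 0 < lam) (h : ‖pt x y‖ < 1/lam) :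
    lam^2*(x^2+y^2) < 1 := by
  have h2 : ‖pt x y‖^2 < (1/lam)^2 :=
    pow_lt_pow_left₀ h (norm_nonneg _) two_ne_zero
  rw [pt_norm_sq] at h2
  have hl2 : 0 < lam^2 := by positivity
  rw [div_pow, one_pow, lt_div_iff₀ hl2] at h2
  linarith [h2]

lemma dF_pt (lam a b a' c : ℝ) (hne : pt a b ≠ pt a' c) :
    dF lam (pt a b) (pt a' c) = (1/lam) * Real.log
      ((Real.sqrt (lam^2*(a*(a'-a)+b*(c-b))^2 + (1-lam^2*(a^2+b^2))*((a'-a)^2+(c-b)^2))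
         - lam*(a*(a'-a)+b*(c-b))) /
       (Real.sqrt (lam^2*(a*(a'-a)+b*(c-b))^2 + (1-lam^2*(a^2+b^2))*((a'-a)^2+(c-b)^2))
         - lam*(a'*(a'-a)+c*(c-b)))) := by
  rw [dF, if_neg hne, pt_sub, pt_inner, pt_inner, pt_norm_sq, pt_norm_sq]

lemma pos_core {S x p : ℝ} (hS0 : 0 ≤ S) (hp : 0 < p) (h : S^2 - x^2 = p) : 0 < S - x := by
  nlinarith

lemma ratio_core {lam r ip iq n2 S A' : ℝ} (hlam : 0 < lam) (hr1 : 1 ≤ r)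
    (hnum : 0 < S + lam*ip)
    (hL2 : (lam*(r*iq-ip))^2 - (r-1)^2*S^2 = lam^2*n2*A'^2)
    (hiq : iq - ip = n2) (hn2 : 0 < n2) :
    r*(S - lam*iq) ≤ S - lam*ip := by
  have hr0 : (0:ℝ) < r := lt_of_lt_of_le one_pos hr1
  have hmain : (r-1)*S ≤ lam*(r*iq - ip) := by
    by_contra h
    push_neg at h
    have h6 : 0 ≤ (lam*(r*iq-ip) - (r-1)*S) * (lam*(r*iq-ip) + (r-1)*S) := by
      nlinarith [mul_nonneg (mul_nonneg (mul_nonneg hlam.le hlam.le) hn2.le) (sq_nonneg A')]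
    have h7 : lam*(r*iq-ip) + (r-1)*S ≤ 0 := by
      by_contra h8
      push_neg at h8
      nlinarith
    nlinarith [mul_pos (mul_pos hlam hr0) hn2, mul_nonneg (sub_nonneg.2 hr1) hnum.le]
  linarith

section Real
variable (lam a b c : ℝ)

lemma hD_neg (hlam : 0 < lam) (hc : lam * |c| < 1) : lam^2*c^2 - 1 < 0 := by
  nlinarith [abs_nonneg c, sq_abs c, mul_nonneg hlam.le (abs_nonneg c)]

lemma key5' : lam^2*(c*(lam^2*b*c-1-lam*|c-b|) - b*(lam^2*c^2-1))^2
      = ((lam^2*b*c-1-lam*|c-b|) - (lam^2*c^2-1))^2 := by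
  linear_combination (lam^2*(lam^2*c^2-1)) * (sq_abs (c-b))

lemma key5 (hlam : 0 < lam) (hc : lam * |c| < 1) :
    lam^2*(((lam^2*b*c-1-lam*|c-b|)/(lam^2*c^2-1))*c - b)^2
      = (((lam^2*b*c-1-lam*|c-b|)/(lam^2*c^2-1)) - 1)^2 := by
  set D := lam^2*c^2 - 1 with hD
  set N := lam^2*b*c-1-lam*|c-b| with hN
  have hD0 : D ≠ 0 := (hD_neg lam c hlam hc).ne
  have hrD : (N/D) * D = N := div_mul_cancel₀ _ hD0
  have h2 : D^2 ≠ 0 := pow_ne_zero _ hD0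
  apply mul_right_cancel₀ h2
  linear_combination key5' lam b c +
    (lam^2*c*(c*((N/D)*D) + c*N - 2*b*D) - ((N/D)*D + N - 2*D)) * hrD

lemma hr_one (hlam : 0 < lam) (hc : lam * |c| < 1) :
    1 ≤ (lam^2*b*c-1-lam*|c-b|)/(lam^2*c^2-1) := by
  have hD := hD_neg lam c hlam hc
  rw [le_div_iff_of_neg hD]
  have h1 : lam*c*(c-b) + |c-b| ≥ 0 := by
    rcases le_or_gt 0 (c*(c-b)) with h | h
    · nlinarith [abs_nonneg (c-b), hlam.le]
    · nlinarith [abs_nonneg (c-b), neg_abs_le (c*(c-b)), abs_mul c (c-b),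
        mul_le_mul_of_nonneg_right hc.le (abs_nonneg (c-b)), hlam.le, abs_nonneg c,
        mul_nonneg hlam.le (abs_nonneg (c-b))]
  nlinarith [mul_nonneg hlam.le h1]

lemma hr_gt (hlam : 0 < lam) (hc : lam * |c| < 1) (hbc : b ≠ c) :
    1 < (lam^2*b*c-1-lam*|c-b|)/(lam^2*c^2-1) := by
  have hD := hD_neg lam c hlam hc
  rw [lt_div_iff_of_neg hD]
  have h1 : lam*c*(c-b) + |c-b| > 0 := by
    rcases le_or_gt 0 (c*(c-b)) with h | h
    · nlinarith [hlam.le, abs_pos.2 (sub_ne_zero.2 (Ne.symm hbc))]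
    · nlinarith [neg_abs_le (c*(c-b)), abs_mul c (c-b),
        mul_lt_mul_of_pos_right hc (abs_pos.2 (sub_ne_zero.2 (Ne.symm hbc))), hlam.le,
        mul_nonneg hlam.le (abs_nonneg (c-b))]
  nlinarith [mul_pos hlam h1]

end Real

lemma ratio_lower (lam a b c a' : ℝ) (hlam : 0 < lam) (hP : lam^2*(a^2+b^2) < 1)
    (hc : lam*|c| < 1) (hQ : lam^2*(a'^2+c^2) < 1)
    (hn2 : 0 < (a'-a)^2 + (c-b)^2) :
    (lam^2*b*c-1-lam*|c-b|)/(lam^2*c^2-1) ≤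
      (Real.sqrt (lam^2*(a*(a'-a)+b*(c-b))^2 + (1-lam^2*(a^2+b^2))*((a'-a)^2+(c-b)^2))
         - lam*(a*(a'-a)+b*(c-b))) /
      (Real.sqrt (lam^2*(a*(a'-a)+b*(c-b))^2 + (1-lam^2*(a^2+b^2))*((a'-a)^2+(c-b)^2))
         - lam*(a'*(a'-a)+c*(c-b))) := by
  have k5 := key5 lam b c hlam hc
  have hr1 := hr_one lam b c hlam hc
  set r := (lam^2*b*c-1-lam*|c-b|)/(lam^2*c^2-1) with hrdef
  set ip := a*(a'-a)+b*(c-b) with hip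
  set iq := a'*(a'-a)+c*(c-b) with hiq
  set n2 := (a'-a)^2 + (c-b)^2 with hn2def
  set arg := lam^2*ip^2 + (1-lam^2*(a^2+b^2))*n2 with hargdef
  have harg0 : 0 ≤ arg := by
    rw [hargdef]
    apply add_nonneg (by positivity)
    exact mul_nonneg (by nlinarith) hn2.le
  set S := Real.sqrt arg with hSdef
  have hS0 : 0 ≤ S := Real.sqrt_nonneg _
  have hS2 : S^2 = arg := Real.sq_sqrt harg0
  have h2 : S^2 - (lam*iq)^2 = n2*(1-lam^2*(a'^2+c^2)) := by
    rw [hS2, hargdef, hip, hiq, hn2def]; ring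
  have hden : 0 < S - lam*iq :=
    pos_core hS0 (mul_pos hn2 (by nlinarith)) h2
  have h3 : S^2 - (lam*ip)^2 = n2*(1-lam^2*(a^2+b^2)) := by
    rw [hS2, hargdef]; ring
  have hnum : 0 < S + lam*ip := by
    have := pos_core hS0 (mul_pos hn2 (by nlinarith)) (by linear_combination h3 : S^2 - (-(lam*ip))^2 = n2*(1-lam^2*(a^2+b^2)))
    linarith
  have hL2 : (lam*(r*iq-ip))^2 - (r-1)^2*S^2 = lam^2*n2*(a'*r-a)^2 := by
    rw [hip, hiq, hn2def]
    linear_combination ((a'-a)^2 + (c-b)^2) * k5 - (r-1)^2 * hS2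
  have hiq' : iq - ip = n2 := by rw [hip, hiq, hn2def]; ring
  rw [le_div_iff₀ hden]
  exact ratio_core hlam hr1 hnum hL2 hiq' hn2

lemma part1 (lam a b c : ℝ) (hlam : 0 < lam) (hP : lam^2*(a^2+b^2) < 1)
    (hb : lam*|b| < 1) (hc : lam*|c| < 1) (hbc : b ≠ c) :
    dF lam (pt a b) (pt (a/((lam^2*b*c-1-lam*|c-b|)/(lam^2*c^2-1))) c)
      = (1/lam) * Real.log ((lam^2*b*c-1-lam*|c-b|)/(lam^2*c^2-1)) := by
  have k5 := key5 lam b c hlam hc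
  have hrg := hr_gt lam b c hlam hc hbc
  have hD := hD_neg lam c hlam hc
  set r := (lam^2*b*c-1-lam*|c-b|)/(lam^2*c^2-1) with hrdef
  have hr0 : (0:ℝ) < r := by linarith
  have hne : pt a b ≠ pt (a/r) c := fun h => hbc (pt_inj h).2
  rw [dF_pt lam a b (a/r) c hne]
  set u := a/r with hudef
  have hur : u * r = a := div_mul_cancel₀ a hr0.ne'
  rw [← hur]
  have harg : lam^2*((u*r)*(u-u*r)+b*(c-b))^2 + (1-lam^2*((u*r)^2+b^2))*((u-u*r)^2+(c-b)^2)
      = |c-b|^2 := by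
    linear_combination (-(u^2)) * k5 - sq_abs (c-b)
  rw [harg, Real.sqrt_sq (abs_nonneg _)]
  have hP' : lam^2*((u*r)^2+b^2) < 1 := by rw [hur]; exact hP
  have hX2 : (lam^2*b*(r*c-b))^2 = (lam * |b| * (r-1))^2 := by
    linear_combination lam^2*b^2*k5 - lam^2*(r-1)^2*(sq_abs b)
  have hY0 : 0 ≤ lam * |b| * (r-1) :=
    mul_nonneg (mul_nonneg hlam.le (abs_nonneg b)) (by linarith)
  have hX : lam^2*b*(r*c-b) ≤ lam * |b| * (r-1) := by nlinarith [hX2, hY0]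
  have hQn : lam^2*(u^2+c^2) < 1 := by
    nlinarith [hP', k5, hX, hrg, mul_nonneg (sub_nonneg.2 hb.le) (by linarith : (0:ℝ) ≤ r - 1),
      mul_pos hr0 hr0]
  have hcb : c - b ≠ 0 := sub_ne_zero.2 (Ne.symm hbc)
  have hn2pos : 0 < (u-u*r)^2+(c-b)^2 := by positivity
  have hI4 : |c-b|^2 - (lam*(u*(u-u*r)+c*(c-b)))^2
      = ((u-u*r)^2+(c-b)^2)*(1-lam^2*(u^2+c^2)) := by
    linear_combination (-1) * harg
  have hden : 0 < |c-b| - lam*(u*(u-u*r)+c*(c-b)) :=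
    pos_core (abs_nonneg (c-b)) (mul_pos hn2pos (by linarith)) hI4
  have hrD : r * (lam^2*c^2-1) = lam^2*b*c-1-lam*|c-b| := by
    rw [hrdef]; exact div_mul_cancel₀ _ hD.ne
  have hmul : (|c-b| - lam*((u*r)*(u-u*r)+b*(c-b))) * (lam^2*c^2-1)
      = (r * (|c-b| - lam*(u*(u-u*r)+c*(c-b)))) * (lam^2*c^2-1) := by
    linear_combination (lam*(c-b)*c - |c-b|) * hrD + lam * (sq_abs (c-b))
  have hnum : |c-b| - lam*((u*r)*(u-u*r)+b*(c-b))
      = r * (|c-b| - lam*(u*(u-u*r)+c*(c-b))) := mul_right_cancel₀ hD.ne hmul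
  rw [hnum, mul_div_assoc, div_self hden.ne', mul_one]

theorem dF_point_to_line (lam a b c : ℝ) (hlam : 0 < lam)
    (hP : ‖pt a b‖ < 1 / lam) (hb : lam * |b| < 1) (hc : lam * |c| < 1) :
    dF lam (pt a b) (pt (a / ((lam ^ 2 * b * c - 1 - lam * |c - b|) / (lam ^ 2 * c ^ 2 - 1))) c)
        = (1 / lam) * Real.log ((lam ^ 2 * b * c - 1 - lam * |c - b|) / (lam ^ 2 * c ^ 2 - 1)) ∧
    ∀ a' : ℝ, ‖pt a' c‖ < 1 / lam →
      (1 / lam) * Real.log ((lam ^ 2 * b * c - 1 - lam * |c - b|) / (lam ^ 2 * c ^ 2 - 1)) ≤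
        dF lam (pt a b) (pt a' c) := by
  have hP' : lam^2*(a^2+b^2) < 1 := norm_lt_conv hlam hP
  have hD := hD_neg lam c hlam hc
  constructor
  · by_cases hbc : b = c
    · subst hbc
      have h1 : lam ^ 2 * b * b - 1 - lam * |b - b| = lam^2*b^2-1 := by
        rw [sub_self, abs_zero]; ring
      rw [h1, div_self hD.ne, div_one, Real.log_one, mul_zero, dF, if_pos rfl]
    · exact part1 lam a b c hlam hP' hb hc hbc
  · intro a' hQ'
    have hQ : lam^2*(a'^2+c^2) < 1 := norm_lt_conv hlam hQ'
    by_cases hpq : pt a b = pt a' c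
    · obtain ⟨h1, h2⟩ := pt_inj hpq
      subst h2
      have h3 : lam ^ 2 * b * b - 1 - lam * |b - b| = lam^2*b^2-1 := by
        rw [sub_self, abs_zero]; ring
      rw [dF, if_pos hpq, h3, div_self hD.ne, Real.log_one, mul_zero]
    · have hn2 : 0 < (a'-a)^2 + (c-b)^2 := by
        rcases lt_or_eq_of_le (by positivity : (0:ℝ) ≤ (a'-a)^2 + (c-b)^2) with h | h
        · exact h
        · exfalso
          apply hpq
          have h1 : a' - a = 0 := by nlinarith [sq_nonneg (a'-a), sq_nonneg (c-b)]
          have h2 : c - b = 0 := by nlinarith [sq_nonneg (a'-a), sq_nonneg (c-b)]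
          have h1' : a = a' := by linarith
          have h2' : b = c := by linarith
          rw [h1', h2']
      rw [dF_pt lam a b a' c hpq]
      have hr1 := hr_one lam b c hlam hc
      have hrat := ratio_lower lam a b c a' hlam hP' hc hQ hn2
      apply mul_le_mul_of_nonneg_left _ (by positivity : (0:ℝ) ≤ 1/lam)
      exact Real.log_le_log (by linarith) hrat
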